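/- Let x* be an equilibrium strategy supported on a maximal r-regular subgraph G* whose connected components G*_1,…,G*_m are all complete graphs on r+1 vertices (minimal r-regular), r > 0. Then x* is weakly rigid: for every d = x − x* with x ∈ S*, x ≠ x*, and all small ε > 0, (x*+εd)ᵀA(x*+εd) ≥ x*ᵀAx*; moreover dᵀAd = Σ_{i=1}^m (Σ_{j∈V*_i} d_j)². -/

import Mathlib

open Matrix Finset

/-- Theorem 3.3: an equilibrium strategy supported on a maximal r-regular
subnetwork whose components are all minimal (complete K_{r+1}) is weakly rigid;
moreover dᵀAd = Σ_k (Σ_{j ∈ V*_k} d_j)². -/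
theorem stmt_8 (n : ℕ) (A : Matrix (Fin n) (Fin n) ℝ)
    (hsym : A.IsSymm)
    (h01 : ∀ i j, A i j = 0 ∨ A i j = 1)
    (hdiag : ∀ i, A i i = 1)
    (r : ℕ) (hr : 0 < r)
    (m : ℕ) (comps : Fin m → Finset (Fin n))
    (hdisj : ∀ k l, k ≠ l → Disjoint (comps k) (comps l))
    (Vs : Finset (Fin n)) (hVs : Vs = Finset.univ.biUnion comps)
    (hne : Vs.Nonempty)
    (hcard : ∀ k, (comps k).card = r + 1)
    (hcomplete : ∀ k, ∀ i ∈ comps k, ∀ j ∈ comps k, A i j = 1)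
    (hcross : ∀ k l, k ≠ l → ∀ i ∈ comps k, ∀ j ∈ comps l, A i j = 0)
    (xstar : Fin n → ℝ)
    (hxstar : xstar = fun i => if i ∈ Vs then ((Vs.card : ℝ))⁻¹ else 0)
    (lam : ℝ) (hlam : ∀ i ∈ Vs, A.mulVec xstar i = lam)
    (hNash : ∀ x ∈ stdSimplex ℝ (Fin n),
        xstar ⬝ᵥ A.mulVec xstar ≤ x ⬝ᵥ A.mulVec xstar) :
    ∀ x ∈ stdSimplex ℝ (Fin n), x ≠ xstar →
      (∀ i ∈ Vs, 0 < x i) → (∀ i, i ∉ Vs → x i = 0) →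
      ((x - xstar) ⬝ᵥ A.mulVec (x - xstar) =
          ∑ k, (∑ j ∈ comps k, (x j - xstar j)) ^ 2) ∧
      ∃ ε₀ > (0 : ℝ), ∀ ε : ℝ, 0 < ε → ε ≤ ε₀ →
        xstar ⬝ᵥ A.mulVec xstar ≤
          (xstar + ε • (x - xstar)) ⬝ᵥ A.mulVec (xstar + ε • (x - xstar)) := by
  intro x hx hxne hpos hzero
  have hd0 : ∀ i, i ∉ Vs → (x - xstar) i = 0 := by
    intro i hi
    simp [hzero i hi, hxstar, hi]
  have hpd : Set.PairwiseDisjoint (↑(Finset.univ : Finset (Fin m))) comps :=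
    fun k _ l _ h => hdisj k l h
  have hxsum : ∑ i ∈ Vs, x i = 1 := by
    rw [Finset.sum_subset (Finset.subset_univ Vs) (fun i _ hi => hzero i hi)]
    exact hx.2
  have hcardpos : (0 : ℝ) < (Vs.card : ℝ) := by
    exact_mod_cast Finset.card_pos.mpr hne
  have hxssum : ∑ i ∈ Vs, xstar i = 1 := by
    rw [hxstar]
    simp only [Finset.sum_ite_mem, Finset.inter_self]
    rw [Finset.sum_const, nsmul_eq_mul]
    field_simp
  have hdsum : ∑ i ∈ Vs, (x - xstar) i = 0 := by
    simp only [Pi.sub_apply, Finset.sum_sub_distrib, hxsum, hxssum, sub_self]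
  have hAd : ∀ k, ∀ i ∈ comps k,
      A.mulVec (x - xstar) i = ∑ j ∈ comps k, (x - xstar) j := by
    intro k i hi
    have h1 : A.mulVec (x - xstar) i = ∑ j ∈ Vs, A i j * (x - xstar) j := by
      rw [Matrix.mulVec, dotProduct]
      exact (Finset.sum_subset (Finset.subset_univ Vs)
        (fun j _ hj => by rw [hd0 j hj, mul_zero])).symm
    rw [h1, hVs, Finset.sum_biUnion hpd]
    rw [Fintype.sum_eq_single k]
    · exact Finset.sum_congr rfl fun j hj => by
        rw [hcomplete k i hi j hj, one_mul]
    · intro l hl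
      exact Finset.sum_eq_zero fun j hj => by
        rw [hcross k l hl.symm i hi j hj, zero_mul]
  have hquad : (x - xstar) ⬝ᵥ A.mulVec (x - xstar) =
      ∑ k, (∑ j ∈ comps k, (x j - xstar j)) ^ 2 := by
    have h1 : (x - xstar) ⬝ᵥ A.mulVec (x - xstar)
        = ∑ i ∈ Vs, (x - xstar) i * A.mulVec (x - xstar) i := by
      rw [dotProduct]
      exact (Finset.sum_subset (Finset.subset_univ Vs)
        (fun i _ hi => by rw [hd0 i hi, zero_mul])).symm
    rw [h1, hVs, Finset.sum_biUnion hpd]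
    refine Finset.sum_congr rfl fun k _ => ?_
    rw [Finset.sum_congr rfl (fun i hi => by rw [hAd k i hi]),
      ← Finset.sum_mul, sq]
    simp [Pi.sub_apply]
  refine ⟨hquad, 1, one_pos, fun ε hε hε1 => ?_⟩
  have hdAx : (x - xstar) ⬝ᵥ A.mulVec xstar = 0 := by
    rw [dotProduct]
    rw [← Finset.sum_subset (Finset.subset_univ Vs)
      (fun i _ hi => by rw [hd0 i hi, zero_mul])]
    rw [Finset.sum_congr rfl (fun i hi => by rw [hlam i hi]),
      ← Finset.sum_mul, hdsum, zero_mul]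
  have hxAd : xstar ⬝ᵥ A.mulVec (x - xstar) = 0 := by
    rw [Matrix.dotProduct_mulVec, ← Matrix.mulVec_transpose, hsym.eq,
      dotProduct_comm]
    exact hdAx
  have hexp : (xstar + ε • (x - xstar)) ⬝ᵥ A.mulVec (xstar + ε • (x - xstar))
      = xstar ⬝ᵥ A.mulVec xstar
        + ε ^ 2 * ((x - xstar) ⬝ᵥ A.mulVec (x - xstar)) := by
    rw [Matrix.mulVec_add, Matrix.mulVec_smul, add_dotProduct,
      dotProduct_add, dotProduct_add, smul_dotProduct,
      smul_dotProduct, dotProduct_smul, dotProduct_smul,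
      hdAx, hxAd]
    simp [smul_smul, sq]
    ring
  rw [hexp]
  have hnn : 0 ≤ (x - xstar) ⬝ᵥ A.mulVec (x - xstar) := by
    rw [hquad]
    exact Finset.sum_nonneg fun k _ => sq_nonneg _
  nlinarith [sq_nonneg ε]
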